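/- Let G be a compact topological group acting continuously by linear automorphisms on ℂⁿ. If v, w ∈ ℂⁿ satisfy P(v, conj(v)) = P(w, conj(w)) for every polynomial P in 2n complex variables x₁,…,xₙ, x̄₁,…,x̄ₙ such that the function u ↦ P(u, conj(u)) is G-invariant, then w lies in the G-orbit of v. In particular, the unitary invariants of any complex representation of a compact group separate orbits. -/

import Mathlib

open MeasureTheory MvPolynomial Finset

namespace UnitaryInvAux

variable {G : Type*} [Group G] {n : ℕ}

/-- The matrix entries of the action: `ent ρ g j i = (ρ g eⱼ) i`. -/
noncomputable def ent (ρ : G →* ((Fin n → ℂ) ≃ₗ[ℂ] (Fin n → ℂ))) (g : G) (j i : Fin n) : ℂ :=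
  ρ g (fun k => if j = k then 1 else 0) i

lemma apply_eq_sum (ρ : G →* ((Fin n → ℂ) ≃ₗ[ℂ] (Fin n → ℂ))) (g : G) (u : Fin n → ℂ)
    (i : Fin n) : ρ g u i = ∑ j, u j * ent ρ g j i := by
  have h := LinearMap.pi_apply_eq_sum_univ
    ((ρ g : (Fin n → ℂ) ≃ₗ[ℂ] (Fin n → ℂ)) : (Fin n → ℂ) →ₗ[ℂ] (Fin n → ℂ)) u
  have : ρ g u = ∑ j, u j • (fun i => ent ρ g j i) := by
    simpa [ent] using h
  rw [this]
  simp only [Finset.sum_apply, Pi.smul_apply, smul_eq_mul]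

/-- index bookkeeping for the substitution -/
def idx : (Fin n ⊕ Fin n) → Fin n → (Fin n ⊕ Fin n) :=
  fun s j => Sum.elim (fun _ => Sum.inl j) (fun _ => Sum.inr j) s

/-- coefficient functions for the substitution -/
noncomputable def cf (ρ : G →* ((Fin n → ℂ) ≃ₗ[ℂ] (Fin n → ℂ))) (g : G) :
    (Fin n ⊕ Fin n) → Fin n → ℂ :=
  fun s j => Sum.elim (fun i => ent ρ g j i) (fun i => starRingEnd ℂ (ent ρ g j i)) s

/-- the substitution assignment: `X (inl i) ↦ ∑ⱼ aᵢⱼ X (inl j)` etc. -/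
noncomputable def asg (ρ : G →* ((Fin n → ℂ) ≃ₗ[ℂ] (Fin n → ℂ))) (g : G) :
    (Fin n ⊕ Fin n) → MvPolynomial (Fin n ⊕ Fin n) ℂ :=
  fun s => ∑ j, C (cf ρ g s j) * X (idx s j)

lemma eval_asg (ρ : G →* ((Fin n → ℂ) ≃ₗ[ℂ] (Fin n → ℂ))) (g : G) (u : Fin n → ℂ)
    (s : Fin n ⊕ Fin n) :
    eval (Sum.elim u fun i => starRingEnd ℂ (u i)) (asg ρ g s) =
      Sum.elim (ρ g u) (fun i => starRingEnd ℂ (ρ g u i)) s := by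
  cases s with
  | inl i =>
      simp only [asg, cf, idx, Sum.elim_inl, map_sum, map_mul, eval_C, eval_X]
      rw [apply_eq_sum ρ g u i]
      exact Finset.sum_congr rfl fun j _ => mul_comm _ _
  | inr i =>
      simp only [asg, cf, idx, Sum.elim_inr, map_sum, map_mul, eval_C, eval_X]
      rw [apply_eq_sum ρ g u i, map_sum]
      simp [map_mul, mul_comm]

lemma eval_subg (ρ : G →* ((Fin n → ℂ) ≃ₗ[ℂ] (Fin n → ℂ))) (g : G) (u : Fin n → ℂ)
    (Q : MvPolynomial (Fin n ⊕ Fin n) ℂ) :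
    eval (Sum.elim u fun i => starRingEnd ℂ (u i)) (bind₁ (asg ρ g) Q) =
      eval (Sum.elim (ρ g u) fun i => starRingEnd ℂ (ρ g u i)) Q := by
  have aeval_c : ∀ {σ : Type} (y : σ → ℂ) (p : MvPolynomial σ ℂ), aeval y p = eval y p := by
    intro σ y p
    rw [aeval_def, Algebra.algebraMap_self]
    rfl
  calc eval (Sum.elim u fun i => starRingEnd ℂ (u i)) (bind₁ (asg ρ g) Q)
      = eval (fun s => eval (Sum.elim u fun i => starRingEnd ℂ (u i)) (asg ρ g s)) Q := by
        rw [← aeval_c, aeval_bind₁]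
        simp only [aeval_c]
    _ = eval (Sum.elim (ρ g u) fun i => starRingEnd ℂ (ρ g u i)) Q := by
        rw [show (fun s => eval (Sum.elim u fun i => starRingEnd ℂ (u i)) (asg ρ g s))
            = Sum.elim (ρ g u) fun i => starRingEnd ℂ (ρ g u i) from funext (eval_asg ρ g u)]

lemma totalDegree_asg_le (ρ : G →* ((Fin n → ℂ) ≃ₗ[ℂ] (Fin n → ℂ))) (g : G)
    (s : Fin n ⊕ Fin n) : (asg ρ g s).totalDegree ≤ 1 := by
  refine (totalDegree_finset_sum _ _).trans ?_
  refine Finset.sup_le fun j _ => ?_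
  refine (totalDegree_mul _ _).trans ?_
  simp [totalDegree_X, totalDegree_C]

lemma totalDegree_bind₁_le {σ τ : Type*} (F : σ → MvPolynomial τ ℂ)
    (hF : ∀ s, (F s).totalDegree ≤ 1) (Q : MvPolynomial σ ℂ) :
    (bind₁ F Q).totalDegree ≤ Q.totalDegree := by
  conv_lhs => rw [Q.as_sum]
  rw [map_sum]
  refine (totalDegree_finset_sum _ _).trans ?_
  refine Finset.sup_le fun m hm => ?_
  rw [show (bind₁ F) ((monomial m) (coeff m Q)) = aeval F ((monomial m) (coeff m Q)) from rfl,
    aeval_monomial]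
  refine (totalDegree_mul _ _).trans ?_
  have h1 : (algebraMap ℂ (MvPolynomial τ ℂ) (coeff m Q)).totalDegree = 0 := totalDegree_C _
  rw [h1, zero_add]
  have h2 : (m.prod fun s k => F s ^ k).totalDegree ≤ ∑ s ∈ m.support, m s := by
    refine (totalDegree_finset_prod _ _).trans ?_
    refine Finset.sum_le_sum fun s _ => ?_
    refine (totalDegree_pow _ _).trans ?_
    exact Nat.mul_le_mul_left _ (hF s) |>.trans (by omega)
  refine h2.trans ?_
  exact le_totalDegree hm

lemma continuous_ent (ρ : G →* ((Fin n → ℂ) ≃ₗ[ℂ] (Fin n → ℂ))) [TopologicalSpace G]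
    (hcont : Continuous fun p : G × (Fin n → ℂ) => ρ p.1 p.2) (j i : Fin n) :
    Continuous fun g => ent ρ g j i := by
  have : Continuous fun g : G => ρ g (fun k => if j = k then (1:ℂ) else 0) :=
    hcont.comp (continuous_id.prodMk continuous_const)
  exact (continuous_apply i).comp this

lemma continuous_cf (ρ : G →* ((Fin n → ℂ) ≃ₗ[ℂ] (Fin n → ℂ))) [TopologicalSpace G]
    (hcont : Continuous fun p : G × (Fin n → ℂ) => ρ p.1 p.2) (s : Fin n ⊕ Fin n) (j : Fin n) :
    Continuous fun g => cf ρ g s j := by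
  cases s with
  | inl i => exact continuous_ent ρ hcont j i
  | inr i => exact continuous_star.comp (continuous_ent ρ hcont j i)

lemma continuous_coeff (ρ : G →* ((Fin n → ℂ) ≃ₗ[ℂ] (Fin n → ℂ))) [TopologicalSpace G]
    (hcont : Continuous fun p : G × (Fin n → ℂ) => ρ p.1 p.2)
    (Q : MvPolynomial (Fin n ⊕ Fin n) ℂ) (m : (Fin n ⊕ Fin n) →₀ ℕ) :
    Continuous fun g => coeff m (bind₁ (asg ρ g) Q) := by
  induction Q using MvPolynomial.induction_on generalizing m with
  | C a => simpa [bind₁_C_right] using continuous_const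
  | add p q hp hq =>
      simp only [map_add, coeff_add]
      exact (hp m).add (hq m)
  | mul_X p s hp =>
      have key : ∀ g, coeff m (bind₁ (asg ρ g) (p * X s)) =
          ∑ j, cf ρ g s j *
            (if idx s j ∈ m.support then
              coeff (m - Finsupp.single (idx s j) 1) (bind₁ (asg ρ g) p) else 0) := by
        intro g
        rw [map_mul, bind₁_X_right]
        have : bind₁ (asg ρ g) p * asg ρ g s
            = ∑ j, C (cf ρ g s j) * (bind₁ (asg ρ g) p * X (idx s j)) := by
          rw [asg, Finset.mul_sum]
          refine Finset.sum_congr rfl fun j _ => by ring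
        rw [this, coeff_sum]
        refine Finset.sum_congr rfl fun j _ => ?_
        rw [coeff_C_mul, coeff_mul_X']
      simp only [key]
      refine continuous_finset_sum _ fun j _ => ?_
      refine (continuous_cf ρ hcont s j).mul ?_
      split_ifs with h
      · exact hp _
      · exact continuous_const

end UnitaryInvAux

open UnitaryInvAux in
theorem unitary_invariants_separate_orbits
    {G : Type*} [Group G] [TopologicalSpace G] [IsTopologicalGroup G] [CompactSpace G]
    {n : ℕ} (ρ : G →* ((Fin n → ℂ) ≃ₗ[ℂ] (Fin n → ℂ)))
    (hcont : Continuous fun p : G × (Fin n → ℂ) => ρ p.1 p.2)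
    (v w : Fin n → ℂ)
    (hsep : ∀ P : MvPolynomial (Fin n ⊕ Fin n) ℂ,
      (∀ (g : G) (u : Fin n → ℂ),
        MvPolynomial.eval (Sum.elim (ρ g u) fun i => starRingEnd ℂ (ρ g u i)) P =
          MvPolynomial.eval (Sum.elim u fun i => starRingEnd ℂ (u i)) P) →
      MvPolynomial.eval (Sum.elim v fun i => starRingEnd ℂ (v i)) P =
        MvPolynomial.eval (Sum.elim w fun i => starRingEnd ℂ (w i)) P) :
    ∃ g : G, (ρ g) v = w := by
  classical
  by_contra hno
  push_neg at hno
  -- the two orbits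
  have contOrb : ∀ u : Fin n → ℂ, Continuous fun g : G => ρ g u := fun u =>
    hcont.comp (continuous_id.prodMk continuous_const)
  set A : Set (Fin n → ℂ) := Set.range fun g => ρ g v with hA
  set B : Set (Fin n → ℂ) := Set.range fun g => ρ g w with hB
  have hAcomp : IsCompact A := isCompact_range (contOrb v)
  have hBcomp : IsCompact B := isCompact_range (contOrb w)
  have hdisj : Disjoint A B := by
    rw [Set.disjoint_left]
    rintro x ⟨g, rfl⟩ ⟨h, hh⟩
    refine hno (h⁻¹ * g) ?_
    have hh' : ρ h w = ρ g v := hh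
    have h1 : ρ (h⁻¹ * g) v = ρ h⁻¹ (ρ g v) := by rw [map_mul]; rfl
    have h2 : ρ h⁻¹ (ρ h w) = ρ (h⁻¹ * h) w := by rw [map_mul]; rfl
    rw [h1, ← hh', h2, inv_mul_cancel, map_one]
    rfl
  -- a continuous function separating the orbits
  obtain ⟨f, hfA, hfB, hf01⟩ :=
    exists_continuous_zero_one_of_isCompact hAcomp hBcomp.isClosed hdisj
  -- Stone–Weierstrass on K = A ∪ B
  set K : Set (Fin n → ℂ) := A ∪ B with hKdef
  have hK : IsCompact K := hAcomp.union hBcomp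
  haveI : CompactSpace K := isCompact_iff_compactSpace.mp hK
  let c : (Fin n ⊕ Fin n) → C(K, ℂ) := fun s => Sum.elim
    (fun i => ⟨fun x => (x : Fin n → ℂ) i, (continuous_apply i).comp continuous_subtype_val⟩)
    (fun i => ⟨fun x => starRingEnd ℂ ((x : Fin n → ℂ) i),
      continuous_star.comp ((continuous_apply i).comp continuous_subtype_val)⟩) s
  set Φ : MvPolynomial (Fin n ⊕ Fin n) ℂ →ₐ[ℂ] C(K, ℂ) := aeval c with hΦdef
  have hΦ : ∀ (q : MvPolynomial (Fin n ⊕ Fin n) ℂ) (x : K),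
      Φ q x = eval (Sum.elim (x : Fin n → ℂ) fun i => starRingEnd ℂ ((x : Fin n → ℂ) i)) q := by
    intro q x
    have he : (ContinuousMap.evalAlgHom ℂ ℂ x).comp (aeval c) = aeval (fun s => c s x) :=
      comp_aeval c _
    have h2g := DFunLike.congr_fun he q
    simp only [AlgHom.comp_apply, ContinuousMap.evalAlgHom_apply] at h2g
    rw [hΦdef, h2g]
    rw [show (fun s => c s x) = (Sum.elim (x : Fin n → ℂ) fun i => starRingEnd ℂ ((x : Fin n → ℂ) i)) by
      funext s; cases s <;> rfl]
    rw [aeval_def, Algebra.algebraMap_self]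
    rfl
  -- the range of Φ is star-closed
  have hstar : ∀ q : MvPolynomial (Fin n ⊕ Fin n) ℂ,
      star (Φ q) = Φ (rename (Sum.swap) (map (starRingEnd ℂ) q)) := by
    intro q
    ext x
    rw [ContinuousMap.star_apply, hΦ, hΦ]
    set y : (Fin n ⊕ Fin n) → ℂ :=
      Sum.elim (x : Fin n → ℂ) fun i => starRingEnd ℂ ((x : Fin n → ℂ) i) with hy
    have h1 : star (eval y q) = eval₂ (starRingEnd ℂ) (fun s => starRingEnd ℂ (y s)) q := by
      have h := eval₂_comp_left (starRingEnd ℂ) (RingHom.id ℂ) y q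
      rw [RingHom.comp_id] at h
      exact h
    have h2 : eval y (rename Sum.swap (map (starRingEnd ℂ) q))
        = eval₂ (starRingEnd ℂ) (fun s => y (Sum.swap s)) q := by
      rw [eval_rename]
      rw [eval_map]
      rfl
    rw [h1, h2]
    congr 1
    funext s
    cases s with
    | inl i => rfl
    | inr i =>
        show starRingEnd ℂ (starRingEnd ℂ ((x : Fin n → ℂ) i)) = (x : Fin n → ℂ) i
        exact Complex.conj_conj _
  set SA : StarSubalgebra ℂ C(K, ℂ) :=
    { toSubalgebra := Φ.range
      star_mem' := by
        rintro F ⟨q, rfl⟩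
        exact ⟨rename Sum.swap (map (starRingEnd ℂ) q), (hstar q).symm⟩ } with hSA
  have hsepPts : SA.SeparatesPoints := by
    intro x y hxy
    have : (x : Fin n → ℂ) ≠ (y : Fin n → ℂ) := fun h => hxy (Subtype.ext h)
    obtain ⟨i, hi⟩ := Function.ne_iff.mp this
    refine ⟨_, ⟨Φ (X (Sum.inl i)), ⟨X (Sum.inl i), rfl⟩, rfl⟩, ?_⟩
    dsimp only
    rw [hΦ, hΦ]
    simpa using hi
  have hdense := ContinuousMap.starSubalgebra_topologicalClosure_eq_top_of_separatesPoints SA hsepPts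
  -- approximate f (as a complex-valued function on K) by an element of the range of Φ
  let fC : C(K, ℂ) := ⟨fun x => (f (x : Fin n → ℂ) : ℂ),
    Complex.continuous_ofReal.comp (f.continuous.comp continuous_subtype_val)⟩
  have hfC : fC ∈ closure (SA : Set C(K, ℂ)) := by
    rw [← StarSubalgebra.topologicalClosure_coe, hdense]
    trivial
  obtain ⟨F, hFmem, hFdist⟩ := Metric.mem_closure_iff.mp hfC (1/3) (by norm_num)
  obtain ⟨Q, rfl⟩ : ∃ q, Φ q = F := hFmem
  have hQapprox : ∀ x : K,
      ‖eval (Sum.elim (x : Fin n → ℂ) fun i => starRingEnd ℂ ((x : Fin n → ℂ) i)) Q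
        - (f (x : Fin n → ℂ) : ℂ)‖ < 1/3 := by
    intro x
    have h1 : dist (fC x) (Φ Q x) ≤ dist fC (Φ Q) := ContinuousMap.dist_apply_le_dist x
    have h2 := h1.trans_lt hFdist
    rw [hΦ] at h2
    rw [← norm_neg]
    simpa [dist_eq_norm, fC] using h2
  -- Haar measure
  letI : MeasurableSpace G := borel G
  haveI : BorelSpace G := ⟨rfl⟩
  set μ : Measure G := (Measure.haar : Measure G).inv with hμdef
  haveI : IsFiniteMeasure μ := ⟨by
    rw [hμdef, Measure.inv_apply, Set.inv_univ]; exact measure_lt_top _ _⟩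
  have hμuniv : μ Set.univ ≠ 0 := by
    rw [hμdef, Measure.inv_apply, Set.inv_univ]
    exact (isOpen_univ.measure_pos _ Set.univ_nonempty).ne'
  have integ : ∀ φ : G → ℂ, Continuous φ → Integrable φ μ := by
    intro φ hφ
    have hb : HasCompactSupport φ :=
      IsCompact.of_isClosed_subset isCompact_univ (isClosed_tsupport φ) (Set.subset_univ _)
    exact hφ.integrable_of_hasCompactSupport hb
  -- the averaged polynomial
  set d : ℕ := Q.totalDegree with hd
  set D : (Fin n ⊕ Fin n) →₀ ℕ := Finsupp.equivFunOnFinite.symm (fun _ => d) with hD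
  set S : Finset ((Fin n ⊕ Fin n) →₀ ℕ) := Finset.Iic D with hS
  have hsupp : ∀ g : G, (bind₁ (asg ρ g) Q).support ⊆ S := by
    intro g m hm
    have h1 : (m.sum fun _ e => e) ≤ d :=
      (le_totalDegree hm).trans (totalDegree_bind₁_le _ (totalDegree_asg_le ρ g) Q)
    rw [hS, Finset.mem_Iic]
    intro s
    have h2 : m s ≤ m.sum fun _ e => e := by
      by_cases h : m s = 0
      · simp [h]
      · exact Finset.single_le_sum (f := fun i => m i) (fun _ _ => Nat.zero_le _)
          (Finsupp.mem_support_iff.mpr h)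
    have h3 : D s = d := by simp [hD, Finsupp.equivFunOnFinite]
    omega
  have hsum : ∀ (g : G) (y : (Fin n ⊕ Fin n) → ℂ),
      eval y (bind₁ (asg ρ g) Q) =
        ∑ m ∈ S, coeff m (bind₁ (asg ρ g) Q) * (m.prod fun i k => y i ^ k) := by
    intro g y
    rw [eval_eq]
    refine Finset.sum_subset (hsupp g) ?_
    intro m _ hm
    rw [MvPolynomial.notMem_support_iff.mp hm, zero_mul]
  have hEcont : ∀ y : (Fin n ⊕ Fin n) → ℂ,
      Continuous fun g : G => eval y (bind₁ (asg ρ g) Q) := by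
    intro y
    simp only [hsum]
    exact continuous_finset_sum _ fun m _ =>
      (continuous_coeff ρ hcont Q m).mul continuous_const
  set P : MvPolynomial (Fin n ⊕ Fin n) ℂ :=
    ∑ m ∈ S, monomial m (∫ g, coeff m (bind₁ (asg ρ g) Q) ∂μ) with hP
  have hevalP : ∀ y : (Fin n ⊕ Fin n) → ℂ,
      eval y P = ∫ g, eval y (bind₁ (asg ρ g) Q) ∂μ := by
    intro y
    rw [hP, map_sum]
    have step : ∀ m ∈ S, eval y (monomial m (∫ g, coeff m (bind₁ (asg ρ g) Q) ∂μ))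
        = ∫ g, coeff m (bind₁ (asg ρ g) Q) * (m.prod fun i k => y i ^ k) ∂μ := by
      intro m _
      rw [eval_monomial, ← integral_mul_const]
    rw [Finset.sum_congr rfl step, ← integral_finset_sum]
    · exact (integral_congr_ae (Filter.EventuallyEq.of_eq (funext fun g => (hsum g y).symm)))
    · intro m _
      exact (integ _ (continuous_coeff ρ hcont Q m)).mul_const _
  -- P is G-invariant
  have hinv : ∀ (g₀ : G) (u : Fin n → ℂ),
      eval (Sum.elim (ρ g₀ u) fun i => starRingEnd ℂ (ρ g₀ u i)) P =
        eval (Sum.elim u fun i => starRingEnd ℂ (u i)) P := by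
    intro g₀ u
    rw [hevalP, hevalP]
    have key : ∀ g : G, eval (Sum.elim (ρ g₀ u) fun i => starRingEnd ℂ (ρ g₀ u i))
        (bind₁ (asg ρ g) Q) =
        eval (Sum.elim u fun i => starRingEnd ℂ (u i)) (bind₁ (asg ρ (g * g₀)) Q) := by
      intro g
      rw [eval_subg, eval_subg]
      have : ρ (g * g₀) u = ρ g (ρ g₀ u) := by rw [map_mul]; rfl
      rw [this]
    calc (∫ g, eval (Sum.elim (ρ g₀ u) fun i => starRingEnd ℂ (ρ g₀ u i)) (bind₁ (asg ρ g) Q) ∂μ)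
        = ∫ g, eval (Sum.elim u fun i => starRingEnd ℂ (u i)) (bind₁ (asg ρ (g * g₀)) Q) ∂μ := by
          exact integral_congr_ae (Filter.EventuallyEq.of_eq (funext key))
      _ = ∫ g, eval (Sum.elim u fun i => starRingEnd ℂ (u i)) (bind₁ (asg ρ g) Q) ∂μ :=
          integral_mul_right_eq_self
            (fun g => eval (Sum.elim u fun i => starRingEnd ℂ (u i)) (bind₁ (asg ρ g) Q)) g₀
  have hPvw := hsep P hinv
  -- compute the two sides
  have hv : eval (Sum.elim v fun i => starRingEnd ℂ (v i)) P
      = ∫ g, eval (Sum.elim (ρ g v) fun i => starRingEnd ℂ (ρ g v i)) Q ∂μ := by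
    rw [hevalP]
    exact integral_congr_ae (Filter.Eventually.of_forall fun g => eval_subg ρ g v Q)
  have hw : eval (Sum.elim w fun i => starRingEnd ℂ (w i)) P
      = ∫ g, eval (Sum.elim (ρ g w) fun i => starRingEnd ℂ (ρ g w i)) Q ∂μ := by
    rw [hevalP]
    exact integral_congr_ae (Filter.Eventually.of_forall fun g => eval_subg ρ g w Q)
  set T : ℝ := (μ Set.univ).toReal with hT
  have hTpos : 0 < T := ENNReal.toReal_pos hμuniv (measure_ne_top μ _)
  -- integrability of the two integrands
  have hiv : Integrable (fun g => eval (Sum.elim (ρ g v) fun i => starRingEnd ℂ (ρ g v i)) Q) μ := by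
    have := hEcont (Sum.elim v fun i => starRingEnd ℂ (v i))
    have h2 := integ _ this
    exact h2.congr (Filter.Eventually.of_forall fun g => eval_subg ρ g v Q)
  have hiw : Integrable (fun g => eval (Sum.elim (ρ g w) fun i => starRingEnd ℂ (ρ g w i)) Q) μ := by
    have := hEcont (Sum.elim w fun i => starRingEnd ℂ (w i))
    have h2 := integ _ this
    exact h2.congr (Filter.Eventually.of_forall fun g => eval_subg ρ g w Q)
  -- bound the real part on the v-side
  have hrev : (eval (Sum.elim v fun i => starRingEnd ℂ (v i)) P).re ≤ (1/3) * T := by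
    rw [hv]
    have h5 := integral_re hiv
    simp only [RCLike.re_to_complex] at h5
    rw [← h5]
    have hb : ∀ g : G, (eval (Sum.elim (ρ g v) fun i => starRingEnd ℂ (ρ g v i)) Q).re ≤ 1/3 := by
      intro g
      have hx : ρ g v ∈ K := Or.inl ⟨g, rfl⟩
      have h0 : f (ρ g v) = 0 := hfA ⟨g, rfl⟩
      have h2 := hQapprox ⟨ρ g v, hx⟩
      simp only [h0, Complex.ofReal_zero, sub_zero] at h2
      exact (Complex.re_le_norm _).trans h2.le
    calc (∫ g, (eval (Sum.elim (ρ g v) fun i => starRingEnd ℂ (ρ g v i)) Q).re ∂μ)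
        ≤ ∫ _g, (1/3 : ℝ) ∂μ := integral_mono hiv.re (integrable_const _) hb
      _ = (1/3) * T := by rw [integral_const]; simp [hT, smul_eq_mul, mul_comm, Measure.real]
  have hrew : (2/3) * T ≤ (eval (Sum.elim w fun i => starRingEnd ℂ (w i)) P).re := by
    rw [hw]
    have h5 := integral_re hiw
    simp only [RCLike.re_to_complex] at h5
    rw [← h5]
    have hb : ∀ g : G, (2/3 : ℝ) ≤ (eval (Sum.elim (ρ g w) fun i => starRingEnd ℂ (ρ g w i)) Q).re := by
      intro g
      have hx : ρ g w ∈ K := Or.inr ⟨g, rfl⟩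
      have h0 : f (ρ g w) = 1 := hfB ⟨g, rfl⟩
      have h2 := hQapprox ⟨ρ g w, hx⟩
      simp only [h0, Complex.ofReal_one] at h2
      set z := eval (Sum.elim (ρ g w) fun i => starRingEnd ℂ (ρ g w i)) Q
      have h3 : |z.re - 1| ≤ ‖z - 1‖ := by
        have := Complex.abs_re_le_norm (z - 1)
        simpa using this
      have h4 : |z.re - 1| < 1/3 := h3.trans_lt h2
      have := abs_lt.mp h4
      linarith [this.1]
    calc (2/3 : ℝ) * T = ∫ _g, (2/3 : ℝ) ∂μ := by rw [integral_const]; simp [hT, smul_eq_mul, mul_comm, Measure.real]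
      _ ≤ _ := integral_mono (integrable_const _) hiw.re hb
  rw [hPvw] at hrev
  linarith
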